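/- Let G : ℝⁿ → ℝ be continuous with a unique global minimum point μ and suppose ∫_{ℝⁿ} exp(−G(x)) dx < ∞ and G is coercive (G(x) → ∞ as |x| → ∞). Then for every closed set V ⊆ ℝⁿ with μ ∉ V, there exists ε > 0 such that e^{N·G(μ)} ∫_V e^{−N·G(x)} dx = O(e^{−Nε}) as N → ∞. -/
import Mathlib


open MeasureTheory Filter Asymptotics Real

theorem stmt8 (n : ℕ) (G : (Fin n → ℝ) → ℝ) (μ : Fin n → ℝ)
    (hcont : Continuous G) (hmin : ∀ x, x ≠ μ → G μ < G x)
    (hint : Integrable fun x : Fin n → ℝ => Real.exp (-G x))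
    (hcoer : Tendsto G (cocompact (Fin n → ℝ)) atTop)
    (V : Set (Fin n → ℝ)) (hV : IsClosed V) (hμV : μ ∉ V) :
    ∃ ε > 0, (fun N : ℕ => Real.exp ((N : ℝ) * G μ) * ∫ x in V, Real.exp (-(N : ℝ) * G x))
      =O[atTop] fun N : ℕ => Real.exp (-(N : ℝ) * ε) := by
  obtain ⟨K, hK, hKG⟩ := (hasBasis_cocompact.eventually_iff).mp
    (hcoer.eventually (eventually_ge_atTop (G μ + 1)))
  obtain ⟨δ, hδpos, hδ⟩ : ∃ δ > 0, ∀ x ∈ V, G μ + δ ≤ G x := by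
    rcases (V ∩ K).eq_empty_or_nonempty with he | hne
    · refine ⟨1, one_pos, fun x hx => hKG (fun hxK =>
        (Set.eq_empty_iff_forall_notMem.mp he x ⟨hx, hxK⟩))⟩
    · obtain ⟨x0, hx0mem, hx0min⟩ := (hK.inter_left hV).exists_isMinOn hne hcont.continuousOn
      have hx0 : G μ < G x0 := hmin x0 (by rintro rfl; exact hμV hx0mem.1)
      refine ⟨min (G x0 - G μ) 1, lt_min (by linarith) one_pos, fun x hx => ?_⟩
      by_cases hxK : x ∈ K
      · have := hx0min ⟨hx, hxK⟩
        simp only [Set.mem_setOf_eq] at this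
        have h1 : min (G x0 - G μ) 1 ≤ G x0 - G μ := min_le_left _ _
        linarith
      · have := hKG hxK
        have h1 : min (G x0 - G μ) 1 ≤ 1 := min_le_right _ _
        linarith
  refine ⟨δ, hδpos, ?_⟩
  rw [isBigO_iff]
  refine ⟨Real.exp (G μ + δ) * ∫ x, Real.exp (-G x), ?_⟩
  filter_upwards [eventually_ge_atTop 1] with N hN
  have hNR : (1:ℝ) ≤ N := by exact_mod_cast hN
  have hbound : ∀ x ∈ V, Real.exp (-(N:ℝ) * G x)
      ≤ Real.exp (-((N:ℝ)-1) * (G μ + δ)) * Real.exp (-G x) := by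
    intro x hx
    rw [← Real.exp_add]
    apply Real.exp_le_exp.mpr
    have h1 := hδ x hx
    nlinarith [mul_nonneg (sub_nonneg.mpr hNR) (sub_nonneg.mpr (hδ x hx))]
  have hint' : Integrable (fun x => Real.exp (-((N:ℝ)-1) * (G μ + δ)) * Real.exp (-G x))
      (volume.restrict V) := hint.restrict.const_mul _
  have h1 : ∫ x in V, Real.exp (-(N:ℝ) * G x)
      ≤ ∫ x in V, Real.exp (-((N:ℝ)-1)*(G μ + δ)) * Real.exp (-G x) := by
    apply integral_mono_of_nonneg
    · exact Filter.Eventually.of_forall fun x => (Real.exp_pos _).le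
    · exact hint'
    · filter_upwards [ae_restrict_mem hV.measurableSet] with x hx using hbound x hx
  have h2 : ∫ x in V, Real.exp (-((N:ℝ)-1)*(G μ + δ)) * Real.exp (-G x)
      = Real.exp (-((N:ℝ)-1)*(G μ + δ)) * ∫ x in V, Real.exp (-G x) := integral_const_mul _ _
  have h3 : ∫ x in V, Real.exp (-G x) ≤ ∫ x, Real.exp (-G x) :=
    setIntegral_le_integral hint (Filter.Eventually.of_forall fun x => (Real.exp_pos _).le)
  have hVnn : (0:ℝ) ≤ ∫ x in V, Real.exp (-(N:ℝ) * G x) :=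
    integral_nonneg fun x => (Real.exp_pos _).le
  have hVnn' : (0:ℝ) ≤ ∫ x in V, Real.exp (-G x) :=
    integral_nonneg fun x => (Real.exp_pos _).le
  rw [Real.norm_eq_abs, Real.norm_eq_abs, abs_of_nonneg (by positivity),
    abs_of_nonneg (Real.exp_pos _).le]
  calc Real.exp ((N:ℝ) * G μ) * ∫ x in V, Real.exp (-(N:ℝ) * G x)
      ≤ Real.exp ((N:ℝ) * G μ) * (Real.exp (-((N:ℝ)-1)*(G μ + δ)) * ∫ x in V, Real.exp (-G x)) := by
        rw [← h2]; exact mul_le_mul_of_nonneg_left h1 (Real.exp_pos _).le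
    _ ≤ Real.exp ((N:ℝ) * G μ) * (Real.exp (-((N:ℝ)-1)*(G μ + δ)) * ∫ x, Real.exp (-G x)) := by
        gcongr
    _ = Real.exp (G μ + δ) * (∫ x, Real.exp (-G x)) * Real.exp (-(N:ℝ) * δ) := by
        rw [← mul_assoc, ← Real.exp_add, mul_right_comm, ← Real.exp_add]
        congr 1
        ring
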